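/- arXiv:1601.03704 — 3 statements merged into one kernel-verified Lean document; each statement's English description precedes it below -/
import Mathlib

section
/- Suppose a symmetric positive semidefinite matrix $A \in \mathbb{R}^{p\times p}$ satisfies the compatibility condition for a set $S \subseteq \{1,\dots,p\}$ of cardinality $s$ with constant $\phi > 0$: for all $\beta$ with $\|\beta_{S^c}\|_1 \le 3\|\beta_S\|_1$, $\|\beta_S\|_1^2 \le (\beta^T A \beta)\, s/\phi^2$. If $\hat{A}$ is another symmetric matrix with $\|\hat{A} - A\|_\infty \le \lambda_1$ (entrywise max norm) and $s\lambda_1 \le \phi^2/32$, then $\hat{A}$ satisfies the compatibility condition for $S$ with constant at least $\phi/\sqrt{2}$: for all $\beta$ with $\|\beta_{S^c}\|_1 \le 3\|\beta_S\|_1$, $\|\beta_S\|_1^2 \le 2(\beta^T \hat{A} \beta)\, s/\phi^2$. -/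
open Matrix Finset

lemma pert_bound {p : ℕ} (M : Matrix (Fin p) (Fin p) ℝ) (lam1 : ℝ)
    (h : ∀ i j, |M i j| ≤ lam1) (β : Fin p → ℝ) :
    |β ⬝ᵥ (M *ᵥ β)| ≤ lam1 * (∑ i, |β i|) ^ 2 := by
  have h1 : β ⬝ᵥ (M *ᵥ β) = ∑ i, ∑ j, β i * (M i j * β j) := by
    simp [dotProduct, mulVec, Finset.mul_sum]
  rw [h1]
  calc |∑ i, ∑ j, β i * (M i j * β j)| ≤ ∑ i, ∑ j, |β i * (M i j * β j)| := by
        refine (Finset.abs_sum_le_sum_abs _ _).trans ?_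
        exact Finset.sum_le_sum fun i _ => Finset.abs_sum_le_sum_abs _ _
    _ ≤ ∑ i, ∑ j, |β i| * (lam1 * |β j|) := by
        refine Finset.sum_le_sum fun i _ => Finset.sum_le_sum fun j _ => ?_
        rw [abs_mul, abs_mul]
        exact mul_le_mul_of_nonneg_left (mul_le_mul_of_nonneg_right (h i j) (abs_nonneg _)) (abs_nonneg _)
    _ = lam1 * (∑ i, |β i|) ^ 2 := by
        rw [sq, Finset.sum_mul_sum]
        simp only [Finset.mul_sum]
        exact Finset.sum_congr rfl fun i _ => Finset.sum_congr rfl fun j _ => by ring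

/-- Stability of the compatibility condition under entrywise perturbation. -/
theorem stmt4 {p : ℕ} (A Ahat : Matrix (Fin p) (Fin p) ℝ)
    (hA : A.PosSemidef) (hAhat : Ahat.IsSymm)
    (S : Finset (Fin p)) (φ lam1 : ℝ) (hφ : 0 < φ)
    (hcompat : ∀ β : Fin p → ℝ,
      (∑ j ∈ Sᶜ, |β j|) ≤ 3 * ∑ j ∈ S, |β j| →
      (∑ j ∈ S, |β j|) ^ 2 ≤ (β ⬝ᵥ (A *ᵥ β)) * (S.card : ℝ) / φ ^ 2)
    (hpert : ∀ i j, |Ahat i j - A i j| ≤ lam1)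
    (hsmall : (S.card : ℝ) * lam1 ≤ φ ^ 2 / 32) :
    ∀ β : Fin p → ℝ,
      (∑ j ∈ Sᶜ, |β j|) ≤ 3 * ∑ j ∈ S, |β j| →
      (∑ j ∈ S, |β j|) ^ 2 ≤ 2 * (β ⬝ᵥ (Ahat *ᵥ β)) * (S.card : ℝ) / φ ^ 2 := by
  intro β hβ
  set t := ∑ j ∈ S, |β j| with ht
  set u := ∑ j ∈ Sᶜ, |β j| with hu
  have ht0 : 0 ≤ t := Finset.sum_nonneg fun j _ => abs_nonneg _
  have hu0 : 0 ≤ u := Finset.sum_nonneg fun j _ => abs_nonneg _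
  by_cases hs : S = ∅
  · simp [ht, hs, Finset.sum_empty]
  · have hcard : 0 < (S.card : ℝ) := by
      have := Finset.card_pos.mpr (Finset.nonempty_iff_ne_empty.mpr hs)
      exact_mod_cast this
    set s : ℝ := (S.card : ℝ)
    -- lam1 ≥ 0
    obtain ⟨i0, hi0⟩ := Finset.nonempty_iff_ne_empty.mpr hs
    have hlam : 0 ≤ lam1 := le_trans (abs_nonneg _) (hpert i0 i0)
    -- total ℓ1 norm
    have hsum : (∑ i, |β i|) = t + u := by
      rw [ht, hu, ← Finset.sum_add_sum_compl S]
    have hsum4 : (∑ i, |β i|) ≤ 4 * t := by rw [hsum]; linarith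
    have hsumnn : 0 ≤ ∑ i, |β i| := Finset.sum_nonneg fun j _ => abs_nonneg _
    -- perturbation bound
    have hbig := pert_bound (Ahat - A) lam1 (by intro i j; simpa using hpert i j) β
    have hsq : (∑ i, |β i|) ^ 2 ≤ (4 * t) ^ 2 := by nlinarith
    have hbig2 : |β ⬝ᵥ ((Ahat - A) *ᵥ β)| ≤ lam1 * (16 * t ^ 2) := by
      calc |β ⬝ᵥ ((Ahat - A) *ᵥ β)| ≤ lam1 * (∑ i, |β i|) ^ 2 := hbig
        _ ≤ lam1 * (16 * t ^ 2) := by nlinarith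
    have hdecomp : β ⬝ᵥ ((Ahat - A) *ᵥ β) = β ⬝ᵥ (Ahat *ᵥ β) - β ⬝ᵥ (A *ᵥ β) := by
      rw [Matrix.sub_mulVec, dotProduct_sub]
    have hQ := hcompat β hβ
    rw [le_div_iff₀ (by positivity)]
    have habs := abs_le.mp hbig2
    rw [hdecomp] at habs
    have hQA : t ^ 2 ≤ β ⬝ᵥ (A *ᵥ β) * s / φ ^ 2 := hcompat β hβ
    rw [le_div_iff₀ (by positivity)] at hQA
    have h3 : s * lam1 ≤ φ ^ 2 / 32 := hsmall
    nlinarith [habs.1, habs.2, sq_nonneg t, mul_nonneg (mul_nonneg hlam (sq_nonneg t)) hcard.le, mul_le_mul_of_nonneg_right h3 (sq_nonneg t)]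
end

section
/- Under the hypotheses of the previous step (cone inequality $2\|\mathbf{X}(\hat\beta-\beta^*)\|_2^2/n + \tilde\lambda\|\hat\beta_{S_*^c}\|_1 \le 3\tilde\lambda\|\hat\beta_{S_*}-\beta^*_{S_*}\|_1$ holds) and assuming additionally that the Gram matrix $\hat\Sigma = \mathbf{X}^T\mathbf{X}/n$ satisfies the compatibility condition $\|\beta_{S_*}\|_1^2 \le 2(\beta^T\hat\Sigma\beta)s_*/(w\phi_*^2)$ for all $\beta$ in the cone $\|\beta_{S_*^c}\|_1 \le 3\|\beta_{S_*}\|_1$ (where $w > 0$, $s_* = |S_*|$), the following oracle inequality holds: $\|\mathbf{X}(\hat\beta - \beta^*)\|_2^2/n + \tilde\lambda\|\hat\beta - \beta^*\|_1 \le 8\tilde\lambda^2 s_*/(w\phi_*^2)$. -/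
open Matrix Finset

/-- Lasso oracle inequality, given the cone inequality and the compatibility
condition for the Gram matrix. -/
theorem stmt6 {m p : ℕ} (n : ℕ) (hn : 0 < n) (Y : Fin m → ℝ)
    (X : Matrix (Fin m) (Fin p) ℝ) (lam : ℝ) (hlam : 0 < lam)
    (S : Finset (Fin p)) (βs : Fin p → ℝ) (hsupp : ∀ j ∉ S, βs j = 0)
    (βhat : Fin p → ℝ) (φ w : ℝ) (hφ : 0 < φ) (hw : 0 < w) (hw1 : w ≤ 1)
    (hcone : 2 * (∑ i, ((X *ᵥ (βhat - βs)) i) ^ 2) / (n : ℝ)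
        + lam * ∑ j ∈ Sᶜ, |βhat j|
      ≤ 3 * lam * ∑ j ∈ S, |βhat j - βs j|)
    (hcompat : ∀ β : Fin p → ℝ,
      (∑ j ∈ Sᶜ, |β j|) ≤ 3 * ∑ j ∈ S, |β j| →
      (∑ j ∈ S, |β j|) ^ 2
        ≤ 2 * ((∑ i, ((X *ᵥ β) i) ^ 2) / (n : ℝ)) * (S.card : ℝ) / (w * φ ^ 2)) :
    (∑ i, ((X *ᵥ (βhat - βs)) i) ^ 2) / (n : ℝ) + lam * ∑ j, |βhat j - βs j|
      ≤ 8 * lam ^ 2 * (S.card : ℝ) / (w * φ ^ 2) := by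
  set Q : ℝ := (∑ i, ((X *ᵥ (βhat - βs)) i) ^ 2) / (n : ℝ) with hQdef
  have hQ0 : 0 ≤ Q :=
    div_nonneg (Finset.sum_nonneg fun i _ => sq_nonneg _) (Nat.cast_nonneg n)
  set a : ℝ := ∑ j ∈ S, |βhat j - βs j| with hadef
  have ha0 : 0 ≤ a := Finset.sum_nonneg fun j _ => abs_nonneg _
  have hbeq : (∑ j ∈ Sᶜ, |βhat j|) = ∑ j ∈ Sᶜ, |βhat j - βs j| :=
    Finset.sum_congr rfl fun j hj => by
      rw [hsupp j (Finset.mem_compl.mp hj), sub_zero]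
  set b : ℝ := ∑ j ∈ Sᶜ, |βhat j - βs j| with hbdef
  have hb0 : 0 ≤ b := Finset.sum_nonneg fun j _ => abs_nonneg _
  have hn0 : (0 : ℝ) < n := by exact_mod_cast hn
  have hcone2 : 2 * Q + lam * b ≤ 3 * lam * a := by
    have h1 := hcone
    rw [hbeq] at h1
    have h2 : (2 * ∑ i, ((X *ᵥ (βhat - βs)) i) ^ 2) / (n : ℝ) = 2 * Q := by
      rw [hQdef]; ring
    linarith [h2.le, h2.ge]
  have hcw : b ≤ 3 * a := by nlinarith
  have hcompat' := hcompat (βhat - βs) (by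
    simpa [Pi.sub_apply, ← hadef, ← hbdef] using hcw)
  have hkey : a ^ 2 ≤ 2 * Q * (S.card : ℝ) / (w * φ ^ 2) := by
    simpa [Pi.sub_apply, ← hadef, ← hQdef] using hcompat'
  have hsplit : (∑ j, |βhat j - βs j|) = a + b := by
    rw [hadef, hbdef]
    exact (Finset.sum_add_sum_compl S _).symm
  rw [hsplit]
  clear_value Q a b
  have hwφ : 0 < w * φ ^ 2 := by positivity
  set C : ℝ := (S.card : ℝ) / (w * φ ^ 2) with hCdef
  clear_value C
  have hC0 : 0 ≤ C := by rw [hCdef]; positivity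
  have hkey' : a ^ 2 ≤ 2 * Q * C := by
    rw [hCdef]; rw [mul_div_assoc] at hkey; exact hkey
  have h16 : 16 * lam ^ 2 * a ^ 2 ≤ 32 * lam ^ 2 * Q * C := by
    nlinarith [mul_le_mul_of_nonneg_left hkey' (by positivity : (0:ℝ) ≤ 16 * lam ^ 2)]
  have hx : 0 ≤ 4 * lam * a := by positivity
  have hy : 0 ≤ Q + 8 * lam ^ 2 * C := by positivity
  have hsq : (4 * lam * a) ^ 2 ≤ (Q + 8 * lam ^ 2 * C) ^ 2 := by
    nlinarith [h16, sq_nonneg (Q - 8 * lam ^ 2 * C)]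
  have h4 : 4 * lam * a ≤ Q + 8 * lam ^ 2 * C :=
    le_of_pow_le_pow_left₀ two_ne_zero hy hsq
  have hgoal : Q + lam * (a + b) ≤ 8 * lam ^ 2 * C := by
    have hexp : lam * (a + b) = lam * a + lam * b := by ring
    linarith
  calc Q + lam * (a + b) ≤ 8 * lam ^ 2 * C := hgoal
    _ = 8 * lam ^ 2 * (S.card : ℝ) / (w * φ ^ 2) := by rw [hCdef]; ring
end

section
/- Suppose Assumptions hold so that for all $j$, $\|\beta^0(j)\|_\infty \le M_*$ and $\|\beta^0(j) - \beta^0(j\pm 1)\|_\infty \le M_*$. Let $(u,v] \subset (\alpha^0_{j-1} - d, \alpha^0_j + d] \cap (0,1]$ with $d = \lambda\sqrt{\delta}/d_* < r(\alpha^0)$, and let $\beta^*_{(u,v]}$ be the convex combination $\sum_r \gamma_{(u,v]}(\alpha^0_r)\beta^0(r)$. Then the bias bound $\|\beta^0(j) - \beta^*_{(u,v]}\|_\infty \le \frac{\max(\alpha^0_{j-1} - u, 0)}{v - u}\|\beta^0(j) - \beta^0(j-1)\|_\infty + \frac{\max(v - \alpha^0_j, 0)}{v-u}\|\beta^0(j+1)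 - \beta^0(j)\|_\infty$ holds. -/
open Finset

noncomputable def linf {p : ℕ} (x : Fin p → ℝ) : ℝ := ⨆ i, |x i|

lemma clamp_eq (u v a b : ℝ) (hab : a ≤ b) (huv : u ≤ v) :
    max 0 (min v b - max u a) = max u (min v b) - max u (min v a) := by
  rcases le_total v a with h1 | h1
  · have h4 : v - max u a ≤ 0 := by have := le_max_right u a; linarith
    rw [min_eq_left (h1.trans hab), min_eq_left h1, max_eq_right huv, max_eq_left h4]
    ring
  · rcases le_total b u with h2 | h2
    · rw [min_eq_right (h2.trans huv), min_eq_right (hab.trans (h2.trans huv)),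
        max_eq_left h2, max_eq_left (hab.trans h2), max_eq_left (by linarith)]
      ring
    · have hmb : u ≤ min v b := le_min huv h2
      have hab' : max u a ≤ min v b := max_le hmb (le_min h1 hab)
      rw [min_eq_right h1, max_eq_right hmb, max_eq_right (by linarith [hab'] : (0:ℝ) ≤ min v b - max u a)]

lemma tele_Icc (G : ℕ → ℝ) (n : ℕ) : ∑ r ∈ Icc 1 n, (G r - G (r - 1)) = G n - G 0 := by
  induction n with
  | zero => simp
  | succ n ih =>
      rw [Finset.sum_Icc_succ_top (by omega), ih]
      simp

lemma linf_nonneg {p : ℕ} (x : Fin p → ℝ) : 0 ≤ linf x :=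
  Real.iSup_nonneg fun i => abs_nonneg _

lemma abs_le_linf {p : ℕ} (x : Fin p → ℝ) (i : Fin p) : |x i| ≤ linf x := by
  unfold linf
  exact le_ciSup (Set.Finite.bddAbove (Set.finite_range fun i => |x i|)) i

/-- Bias bound for the oracle coefficient on an interval `(u,v]` close to the
`j`-th true segment. -/
theorem stmt12 {p : ℕ} (k0 : ℕ) (hk0 : 1 ≤ k0) (α : ℕ → ℝ)
    (hα0 : α 0 = 0) (hα1 : α k0 = 1)
    (hmono : ∀ i j : ℕ, i < j → j ≤ k0 → α i < α j)
    (β0 : ℕ → (Fin p → ℝ)) (Mstar : ℝ) (hM : 0 < Mstar)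
    (hbdd : ∀ l : ℕ, 1 ≤ l → l ≤ k0 → linf (β0 l) ≤ Mstar)
    (hdiff : ∀ l : ℕ, 1 ≤ l → l < k0 → linf (β0 l - β0 (l + 1)) ≤ Mstar)
    (lam δ dstar d : ℝ) (hlam : 0 < lam) (hδ : 0 < δ) (hdstar : 0 < dstar)
    (hd : d = lam * Real.sqrt δ / dstar)
    (hdr : ∀ l : ℕ, 1 ≤ l → l ≤ k0 → d < α l - α (l - 1))
    (j : ℕ) (hj1 : 1 ≤ j) (hjk : j ≤ k0)
    (u v : ℝ) (hu : 0 ≤ u) (huv : u < v) (hv : v ≤ 1)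
    (hul : α (j - 1) - d ≤ u) (hvr : v ≤ α j + d) :
    let βstar : Fin p → ℝ :=
      ∑ r ∈ Finset.Icc 1 k0,
        ((max 0 (min v (α r) - max u (α (r - 1)))) / (v - u)) • β0 r
    linf (β0 j - βstar)
      ≤ (max (α (j - 1) - u) 0) / (v - u) * linf (β0 j - β0 (j - 1))
        + (max (v - α j) 0) / (v - u) * linf (β0 (j + 1) - β0 j) := by
  intro βstar
  have hvu : (0:ℝ) < v - u := by linarith
  set W : ℕ → ℝ := fun r => (max 0 (min v (α r) - max u (α (r - 1)))) / (v - u) with hW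
  have hd0 : 0 < d := by
    rw [hd]; positivity
  have hmono' : ∀ i l : ℕ, i ≤ l → l ≤ k0 → α i ≤ α l := by
    intro i l hil hlk
    rcases eq_or_lt_of_le hil with h | h
    · rw [h]
    · exact (hmono i l h hlk).le
  -- nonnegativity of weights
  have hW0 : ∀ r, 0 ≤ W r := fun r => div_nonneg (le_max_left _ _) hvu.le
  -- sum of weights is 1
  have hsum : ∑ r ∈ Finset.Icc 1 k0, W r = 1 := by
    have hnum : ∑ r ∈ Finset.Icc 1 k0, max 0 (min v (α r) - max u (α (r - 1)))
        = v - u := by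
      have : ∀ r ∈ Finset.Icc 1 k0, max 0 (min v (α r) - max u (α (r - 1)))
          = (fun s => max u (min v (α s))) r - (fun s => max u (min v (α s))) (r - 1) := by
        intro r hr
        simp only [Finset.mem_Icc] at hr
        exact clamp_eq u v (α (r - 1)) (α r) (hmono' (r-1) r (by omega) hr.2) huv.le
      rw [Finset.sum_congr rfl this, tele_Icc (fun s => max u (min v (α s))) k0]
      simp only [hα0, hα1]
      rw [min_eq_left hv, min_eq_right (by linarith : (0:ℝ) ≤ v), max_eq_right huv.le,
        max_eq_left hu]
    rw [hW]
    simp only []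
    rw [← Finset.sum_div, hnum, div_self hvu.ne']
  -- vanishing weights away from j
  have hzero : ∀ r ∈ Finset.Icc 1 k0, r ≠ j - 1 → r ≠ j → r ≠ j + 1 → W r = 0 := by
    intro r hr h1 h2 h3
    simp only [Finset.mem_Icc] at hr
    have hcase : r + 1 ≤ j - 1 ∨ j + 2 ≤ r := by omega
    have key : min v (α r) - max u (α (r - 1)) ≤ 0 := by
      rcases hcase with hc | hc
      · -- r ≤ j - 2
        have hj2 : 2 ≤ j := by omega
        have hdα : d < α (j - 1) - α (j - 1 - 1) := hdr (j-1) (by omega) (by omega)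
        have hj11 : j - 1 - 1 = j - 2 := by omega
        rw [hj11] at hdα
        have hαr : α r ≤ α (j - 2) := hmono' r (j-2) (by omega) (by omega)
        have h5 : min v (α r) ≤ α r := min_le_right _ _
        have h6 : u ≤ max u (α (r - 1)) := le_max_left _ _
        -- α (j-2) < α (j-1) - d ≤ u
        linarith
      · -- r ≥ j + 2
        have hjk1 : j + 1 ≤ k0 := by omega
        have hdα : d < α (j + 1) - α (j + 1 - 1) := hdr (j+1) (by omega) hjk1
        have hj11 : j + 1 - 1 = j := by omega
        rw [hj11] at hdα
        have hαr : α (j + 1) ≤ α (r - 1) := hmono' (j+1) (r-1) (by omega) (by omega)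
        have h5 : min v (α r) ≤ v := min_le_left _ _
        have h6 : α (r - 1) ≤ max u (α (r - 1)) := le_max_right _ _
        linarith
    rw [hW]
    simp only []
    rw [max_eq_left key, zero_div]
  -- weight bounds
  set c1 : ℝ := (max (α (j - 1) - u) 0) / (v - u) with hc1
  set c2 : ℝ := (max (v - α j) 0) / (v - u) with hc2
  have hc1nn : 0 ≤ c1 := div_nonneg (le_max_right _ _) hvu.le
  have hc2nn : 0 ≤ c2 := div_nonneg (le_max_right _ _) hvu.le
  have hWj1 : W (j - 1) ≤ c1 := by
    rw [hW, hc1]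
    apply (div_le_div_iff_of_pos_right hvu).mpr
    · rw [max_comm (α (j-1) - u) 0]
      apply max_le_max le_rfl
      have := min_le_right v (α (j - 1))
      have := le_max_left u (α (j - 1 - 1))
      linarith
  have hWj2 : W (j + 1) ≤ c2 := by
    rw [hW, hc2]
    apply (div_le_div_iff_of_pos_right hvu).mpr
    · rw [max_comm (v - α j) 0]
      apply max_le_max le_rfl
      have h11 : j + 1 - 1 = j := by omega
      rw [h11]
      have := min_le_left v (α (j + 1))
      have := le_max_right u (α j)
      linarith
  set L1 : ℝ := linf (β0 j - β0 (j - 1)) with hL1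
  set L2 : ℝ := linf (β0 (j + 1) - β0 j) with hL2
  have hL1nn : 0 ≤ L1 := linf_nonneg _
  have hL2nn : 0 ≤ L2 := linf_nonneg _
  -- pointwise bound
  have hpt : ∀ i : Fin p, |(β0 j - βstar) i| ≤ c1 * L1 + c2 * L2 := by
    intro i
    have hβi : (β0 j - βstar) i = ∑ r ∈ Finset.Icc 1 k0, W r * (β0 j i - β0 r i) := by
      have hbs : βstar i = ∑ r ∈ Finset.Icc 1 k0, W r * β0 r i := by
        simp [βstar, W, Finset.sum_apply]
      rw [Pi.sub_apply, hbs]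
      rw [show (∑ r ∈ Finset.Icc 1 k0, W r * (β0 j i - β0 r i))
          = (∑ r ∈ Finset.Icc 1 k0, W r) * β0 j i
            - ∑ r ∈ Finset.Icc 1 k0, W r * β0 r i by
        rw [Finset.sum_mul, ← Finset.sum_sub_distrib]
        exact Finset.sum_congr rfl fun r _ => by ring]
      rw [hsum, one_mul]
    rw [hβi]
    calc |∑ r ∈ Finset.Icc 1 k0, W r * (β0 j i - β0 r i)|
        ≤ ∑ r ∈ Finset.Icc 1 k0, |W r * (β0 j i - β0 r i)| :=
          Finset.abs_sum_le_sum_abs _ _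
      _ ≤ ∑ r ∈ Finset.Icc 1 k0,
            ((if r = j - 1 then c1 * L1 else 0) + (if r = j + 1 then c2 * L2 else 0)) := by
          apply Finset.sum_le_sum
          intro r hr
          rw [abs_mul, abs_of_nonneg (hW0 r)]
          by_cases h1 : r = j - 1
          · subst h1
            have hne : ¬ (j - 1 = j + 1) := by omega
            rw [if_pos rfl, if_neg hne, add_zero]
            have habs : |β0 j i - β0 (j - 1) i| ≤ L1 := by
              have := abs_le_linf (β0 j - β0 (j - 1)) i
              simpa using this
            exact mul_le_mul hWj1 habs (abs_nonneg _) hc1nn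
          · by_cases h2 : r = j + 1
            · subst h2
              rw [if_neg h1, if_pos rfl, zero_add]
              have habs : |β0 j i - β0 (j + 1) i| ≤ L2 := by
                have := abs_le_linf (β0 (j + 1) - β0 j) i
                rw [abs_sub_comm]
                simpa using this
              exact mul_le_mul hWj2 habs (abs_nonneg _) hc2nn
            · rw [if_neg h1, if_neg h2, add_zero]
              by_cases h3 : r = j
              · subst h3; simp
              · rw [hzero r hr h1 h3 h2, zero_mul]
      _ = (if j - 1 ∈ Finset.Icc 1 k0 then c1 * L1 else 0)
            + (if j + 1 ∈ Finset.Icc 1 k0 then c2 * L2 else 0) := by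
          rw [Finset.sum_add_distrib, Finset.sum_ite_eq' _ (j-1) (fun _ => c1 * L1),
            Finset.sum_ite_eq' _ (j+1) (fun _ => c2 * L2)]
      _ ≤ c1 * L1 + c2 * L2 := by
          apply add_le_add <;> split_ifs <;>
            first
              | exact le_rfl
              | exact mul_nonneg (by assumption) (by assumption)
  exact Real.iSup_le hpt (by positivity)
end
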